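/- Let A be a 3×3 entrywise nonnegative irreducible real matrix whose diagonal entries are all strictly less than 1 and such that det(I₃ − A) > 0. Then the spectral radius of A is strictly less than 1. -/

import Mathlib

open Matrix

/-- The spectral radius of a real square matrix. -/
noncomputable def specRad {n : ℕ} (A : Matrix (Fin n) (Fin n) ℝ) : ℝ :=
  sSup ((fun z : ℂ => ‖z‖) '' spectrum ℂ (A.map (algebraMap ℝ ℂ)))

/-- A nonnegative matrix is irreducible if its directed graph (with an edge `i → j`
whenever `A i j > 0`) is strongly connected. -/
def MatIrreducible {n : ℕ} (A : Matrix (Fin n) (Fin n) ℝ) : Prop :=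
  ∀ i j, Relation.TransGen (fun a b => 0 < A a b) i j

section Aux

open Polynomial

lemma charpoly_eval_eq {n : Type*} [Fintype n] [DecidableEq n] {R : Type*} [CommRing R]
    (M : Matrix n n R) (r : R) :
    M.charpoly.eval r = (algebraMap R (Matrix n n R) r - M).det := by
  rw [Matrix.charpoly, _root_.eval_det, Matrix.matPolyEquiv_charmatrix]
  simp [Matrix.algebraMap_eq_diagonal, Matrix.scalar_apply, Pi.algebraMap_def, Algebra.algebraMap_self_apply]

lemma mem_spectrum_iff_isRoot {n : Type*} [Fintype n] [DecidableEq n]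
    (M : Matrix n n ℂ) (z : ℂ) :
    z ∈ spectrum ℂ M ↔ M.charpoly.IsRoot z := by
  rw [spectrum.mem_iff, Polynomial.IsRoot, charpoly_eval_eq]
  constructor
  · intro h
    by_contra hd
    exact h ((Matrix.isUnit_iff_isUnit_det _).mpr (Ne.isUnit hd))
  · intro h hu
    exact (((Matrix.isUnit_iff_isUnit_det _).mp hu).ne_zero) h

lemma key_ineq (x0 x1 x2 r0 r1 r2 P0 P1 P2 C : ℝ)
    (hx0 : 0 ≤ x0) (hx1 : 0 ≤ x1) (hx2 : 0 ≤ x2)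
    (hP0 : 0 ≤ P0) (hP1 : 0 ≤ P1) (hP2 : 0 ≤ P2) (hC : 0 ≤ C)
    (h0 : x0 ≤ r0) (h1 : x1 ≤ r1) (h2 : x2 ≤ r2)
    (hid : r0 * r1 * r2 = P0 * r0 + P1 * r1 + P2 * r2 + C) :
    x0 * x1 * x2 - P0 * x0 - P1 * x1 - P2 * x2 - C ≤ 0 := by
  have hr0 : 0 ≤ r0 := le_trans hx0 h0
  have hr1 : 0 ≤ r1 := le_trans hx1 h1
  rcases le_or_gt (x1 * x2) P0 with h | h
  · nlinarith [mul_nonneg hP1 hx1, mul_nonneg hP2 hx2,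
      mul_nonpos_of_nonneg_of_nonpos hx0 (by linarith : x1 * x2 - P0 ≤ 0)]
  · have e1 : x0 * (x1 * x2 - P0) ≤ r0 * (x1 * x2 - P0) :=
      mul_le_mul_of_nonneg_right h0 (by linarith)
    rcases le_or_gt (r0 * x2) P1 with h' | h'
    · nlinarith [mul_nonneg hP0 hr0, mul_nonneg hP2 hx2,
        mul_nonpos_of_nonneg_of_nonpos hx1 (by linarith : r0 * x2 - P1 ≤ 0)]
    · have e2 : x1 * (r0 * x2 - P1) ≤ r1 * (r0 * x2 - P1) :=
        mul_le_mul_of_nonneg_right h1 (by linarith)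
      rcases le_or_gt (r0 * r1) P2 with h'' | h''
      · nlinarith [mul_nonneg hP0 hr0, mul_nonneg hP1 hr1,
          mul_nonpos_of_nonneg_of_nonpos hx2 (by linarith : r0 * r1 - P2 ≤ 0)]
      · have e3 : x2 * (r0 * r1 - P2) ≤ r2 * (r0 * r1 - P2) :=
          mul_le_mul_of_nonneg_right h2 (by linarith)
        nlinarith [e1, e2, e3]

lemma det_nonpos_aux (A : Matrix (Fin 3) (Fin 3) ℝ)
    (hA : ∀ i j, 0 ≤ A i j) (hdiag : ∀ i, A i i < 1)
    (u : Fin 3 → ℝ) (hu : ∀ i, 0 < u i)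
    (hrow : ∀ i, u i ≤ ∑ j, A i j * u j) :
    ((1 : Matrix (Fin 3) (Fin 3) ℝ) - A).det ≤ 0 := by
  have h0 := hrow 0; have h1 := hrow 1; have h2 := hrow 2
  simp only [Fin.sum_univ_three] at h0 h1 h2
  have key := key_ineq ((1 - A 0 0) * u 0) ((1 - A 1 1) * u 1) ((1 - A 2 2) * u 2)
    (A 0 1 * u 1 + A 0 2 * u 2) (A 1 0 * u 0 + A 1 2 * u 2) (A 2 0 * u 0 + A 2 1 * u 1)
    (A 1 2 * A 2 1 * (u 1 * u 2)) (A 0 2 * A 2 0 * (u 0 * u 2)) (A 0 1 * A 1 0 * (u 0 * u 1))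
    ((A 0 1 * A 1 2 * A 2 0 + A 0 2 * A 1 0 * A 2 1) * (u 0 * u 1 * u 2))
    (mul_nonneg (by linarith [hdiag 0]) (hu 0).le)
    (mul_nonneg (by linarith [hdiag 1]) (hu 1).le)
    (mul_nonneg (by linarith [hdiag 2]) (hu 2).le)
    (mul_nonneg (mul_nonneg (hA 1 2) (hA 2 1)) (mul_nonneg (hu 1).le (hu 2).le))
    (mul_nonneg (mul_nonneg (hA 0 2) (hA 2 0)) (mul_nonneg (hu 0).le (hu 2).le))
    (mul_nonneg (mul_nonneg (hA 0 1) (hA 1 0)) (mul_nonneg (hu 0).le (hu 1).le))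
    (mul_nonneg (add_nonneg (mul_nonneg (mul_nonneg (hA 0 1) (hA 1 2)) (hA 2 0))
      (mul_nonneg (mul_nonneg (hA 0 2) (hA 1 0)) (hA 2 1)))
      (mul_nonneg (mul_nonneg (hu 0).le (hu 1).le) (hu 2).le))
    (by nlinarith [hu 0]) (by nlinarith [hu 1]) (by nlinarith [hu 2])
    (by ring)
  have hprod : 0 < u 0 * (u 1 * u 2) := by
    exact mul_pos (hu 0) (mul_pos (hu 1) (hu 2))
  have hdet3 : ((1 : Matrix (Fin 3) (Fin 3) ℝ) - A).det =
      (1 - A 0 0) * (1 - A 1 1) * (1 - A 2 2)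
        - (1 - A 0 0) * (A 1 2 * A 2 1) - (1 - A 1 1) * (A 0 2 * A 2 0)
        - (1 - A 2 2) * (A 0 1 * A 1 0)
        - A 0 1 * A 1 2 * A 2 0 - A 0 2 * A 1 0 * A 2 1 := by
    rw [Matrix.det_fin_three]
    simp [Matrix.sub_apply, Matrix.one_apply, Fin.ext_iff]
    ring
  rw [hdet3]
  nlinarith [key, hprod]

end Aux

theorem specRad_lt_one_of_diag_lt_one_det_pos
    (A : Matrix (Fin 3) (Fin 3) ℝ)
    (hA : ∀ i j, 0 ≤ A i j) (hirr : MatIrreducible A)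
    (hdiag : ∀ i, A i i < 1)
    (hdet : 0 < ((1 : Matrix (Fin 3) (Fin 3) ℝ) - A).det) :
    specRad A < 1 := by
  classical
  set M := A.map (algebraMap ℝ ℂ) with hM
  -- entrywise nonnegativity of powers of A
  have hpow : ∀ (k : ℕ) (i j : Fin 3), 0 ≤ (A ^ k) i j := by
    intro k
    induction k with
    | zero =>
      intro i j
      by_cases h : i = j <;> simp [h, Matrix.one_apply]
    | succ k ih =>
      intro i j
      rw [pow_succ, Matrix.mul_apply]
      exact Finset.sum_nonneg fun m _ => mul_nonneg (ih i m) (hA m j)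
  -- irreducibility gives positive entries of powers
  have htrans : ∀ i j : Fin 3, ∃ L : ℕ, 0 < (A ^ (L + 1)) i j := by
    intro i j
    induction hirr i j with
    | single h => exact ⟨0, by simpa using h⟩
    | @tail b c hT hr ih =>
      obtain ⟨L, hL⟩ := ih
      refine ⟨L + 1, ?_⟩
      rw [pow_succ, Matrix.mul_apply]
      refine Finset.sum_pos' (fun m _ => mul_nonneg (hpow _ i m) (hA m c)) ?_
      exact ⟨b, Finset.mem_univ b, mul_pos hL hr⟩
  -- main step: no nonzero nonnegative subinvariant vector exists
  have main : ∀ w : Fin 3 → ℝ, (∀ i, 0 ≤ w i) → (∃ i, 0 < w i) →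
      (∀ i, w i ≤ ∑ j, A i j * w j) → False := by
    intro w hw hex hAw
    obtain ⟨j0, hj0⟩ := hex
    set f : ℕ → Fin 3 → ℝ := fun k i => ∑ j, (A ^ k) i j * w j with hf
    have hfnn : ∀ k i, 0 ≤ f k i :=
      fun k i => Finset.sum_nonneg fun j _ => mul_nonneg (hpow k i j) (hw j)
    have hswap : ∀ k i, f (k + 1) i = ∑ m, A i m * f k m := by
      intro k i
      have : f (k + 1) i = ∑ j, ∑ m, A i m * ((A ^ k) m j * w j) := by
        simp only [hf, pow_succ', Matrix.mul_apply, Finset.sum_mul, mul_assoc]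
      rw [this, Finset.sum_comm]
      simp [hf, Finset.mul_sum]
    have hstep : ∀ k i, f k i ≤ f (k + 1) i := by
      intro k i
      have he : f (k + 1) i = ∑ m, (A ^ k) i m * (∑ j, A m j * w j) := by
        have : f (k + 1) i = ∑ j, ∑ m, (A ^ k) i m * (A m j * w j) := by
          simp only [hf, pow_succ, Matrix.mul_apply, Finset.sum_mul, mul_assoc]
        rw [this, Finset.sum_comm]
        simp [hf, Finset.mul_sum]
      rw [he]
      exact Finset.sum_le_sum fun m _ => mul_le_mul_of_nonneg_left (hAw m) (hpow k i m)
    choose L hL using fun i => htrans i j0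
    set N := Finset.univ.sup fun i : Fin 3 => L i + 2 with hN
    have hLN : ∀ i : Fin 3, L i + 1 < N := by
      intro i
      have : L i + 2 ≤ N := by
        rw [hN]
        exact Finset.le_sup (f := fun i : Fin 3 => L i + 2) (Finset.mem_univ i)
      omega
    set u : Fin 3 → ℝ := fun i => ∑ k ∈ Finset.range N, f k i with hu
    have hupos : ∀ i, 0 < u i := by
      intro i
      refine Finset.sum_pos' (fun k _ => hfnn k i) ⟨L i + 1, Finset.mem_range.mpr (hLN i), ?_⟩
      refine Finset.sum_pos' (fun j _ => mul_nonneg (hpow _ i j) (hw j)) ?_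
      exact ⟨j0, Finset.mem_univ j0, mul_pos (hL i) hj0⟩
    have hrow : ∀ i, u i ≤ ∑ j, A i j * u j := by
      intro i
      have hRHS : ∑ j, A i j * u j = ∑ k ∈ Finset.range N, f (k + 1) i := by
        simp only [hu, Finset.mul_sum]
        rw [Finset.sum_comm]
        exact Finset.sum_congr rfl fun k _ => (hswap k i).symm
      rw [hRHS]
      exact Finset.sum_le_sum fun k _ => hstep k i
    exact absurd (det_nonpos_aux A hA hdiag u hupos hrow) (not_le.mpr hdet)
  -- every complex eigenvalue has modulus < 1
  have habs : ∀ z ∈ spectrum ℂ M, ‖z‖ < 1 := by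
    intro μ hμ
    by_contra hge
    push_neg at hge
    have hdet0 : (algebraMap ℂ (Matrix (Fin 3) (Fin 3) ℂ) μ - M).det = 0 := by
      have h := (mem_spectrum_iff_isRoot M μ).mp hμ
      rwa [Polynomial.IsRoot, charpoly_eval_eq] at h
    obtain ⟨v, hv0, hv⟩ := (Matrix.exists_mulVec_eq_zero_iff).mpr hdet0
    have hvi : ∀ i, μ * v i = ∑ j, (A i j : ℂ) * v j := by
      intro i
      have h := congrFun hv i
      rw [Matrix.sub_mulVec, Pi.sub_apply] at h
      have h1 : ((algebraMap ℂ (Matrix (Fin 3) (Fin 3) ℂ)) μ *ᵥ v) i = μ * v i := by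
        rw [Matrix.algebraMap_eq_diagonal]
        simp [Matrix.mulVec_diagonal]
      have h2 : (M *ᵥ v) i = ∑ j, (A i j : ℂ) * v j := by
        simp [hM, Matrix.mulVec, dotProduct, Matrix.map_apply]
      rw [h1, h2] at h
      exact sub_eq_zero.mp h
    refine main (fun i => ‖v i‖) (fun i => norm_nonneg _) ?_ ?_
    · obtain ⟨i, hi⟩ := Function.ne_iff.mp hv0
      exact ⟨i, norm_pos_iff.mpr (by simpa using hi)⟩
    · intro i
      calc ‖v i‖ ≤ ‖μ‖ * ‖v i‖ :=
            le_mul_of_one_le_left (norm_nonneg _) hge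
        _ = ‖μ * v i‖ := (norm_mul μ (v i)).symm
        _ = ‖∑ j, (A i j : ℂ) * v j‖ := by rw [hvi i]
        _ ≤ ∑ j, ‖(A i j : ℂ) * v j‖ :=
            norm_sum_le _ _
        _ = ∑ j, A i j * ‖v j‖ := by
            refine Finset.sum_congr rfl fun j _ => ?_
            rw [norm_mul, Complex.norm_real, Real.norm_of_nonneg (hA i j)]
  -- conclude
  have hfin : (spectrum ℂ M).Finite := by
    refine Set.Finite.subset (Polynomial.finite_setOf_isRoot (M.charpoly_monic.ne_zero)) ?_
    exact fun z hz => (mem_spectrum_iff_isRoot M z).mp hz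
  have hne : (spectrum ℂ M).Nonempty := by
    obtain ⟨z, hz⟩ := Complex.exists_root (f := M.charpoly)
      (by rw [Matrix.charpoly_degree_eq_dim]; simp)
    exact ⟨z, (mem_spectrum_iff_isRoot M z).mpr hz⟩
  have hmem := (hne.image (fun z : ℂ => ‖z‖)).csSup_mem (hfin.image _)
  obtain ⟨μ, hμS, hμeq⟩ := hmem
  show sSup ((fun z : ℂ => ‖z‖) '' spectrum ℂ M) < 1
  rw [← hμeq]
  exact habs μ hμS
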